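/- Let d ≥ 1 be an integer, let σ > 0, m ∈ ℝ and b ∈ ℝ be real numbers, and let w ∈ ℝ^d be a nonzero vector. Let μ be the product probability measure on ℝ^d (functions Fin d → ℝ) whose coordinates are independent one-dimensional Gaussians gaussianReal m σ². Then μ({x : ⟨w, x⟩ + b < 0}) = Φ(−(b + m·(w₁ + … + w_d))/(σ·‖w‖)), where ‖w‖ = √(w₁² + … + w_d²). -/

import Mathlib

open MeasureTheory ProbabilityTheory Real Set
open scoped NNReal ENNReal

lemma gaussianPDFReal_conv (μ₁ μ₂ : ℝ) {v₁ v₂ : ℝ≥0} (h₁ : v₁ ≠ 0) (h₂ : v₂ ≠ 0) (z : ℝ) :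
    ∫ x, gaussianPDFReal μ₁ v₁ x * gaussianPDFReal μ₂ v₂ (z - x)
      = gaussianPDFReal (μ₁ + μ₂) (v₁ + v₂) z := by
  have hv₁ : (0:ℝ) < v₁ := lt_of_le_of_ne v₁.2 (by exact_mod_cast (Ne.symm h₁))
  have hv₂ : (0:ℝ) < v₂ := lt_of_le_of_ne v₂.2 (by exact_mod_cast (Ne.symm h₂))
  set k : ℝ := (v₁ + v₂) / (2 * v₁ * v₂) with hk
  have hkpos : 0 < k := by positivity
  set c : ℝ := μ₁ + v₁ * (z - μ₁ - μ₂) / (v₁ + v₂) with hc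
  set D : ℝ := -(z - (μ₁ + μ₂))^2 / (2 * (v₁ + v₂)) with hD
  have key : ∀ x : ℝ, gaussianPDFReal μ₁ v₁ x * gaussianPDFReal μ₂ v₂ (z - x)
      = ((√(2 * π * v₁))⁻¹ * (√(2 * π * v₂))⁻¹ * rexp D) * rexp (-(k * (x - c)^2)) := by
    intro x
    simp only [gaussianPDFReal]
    rw [show (√(2 * π * v₁))⁻¹ * rexp (-(x - μ₁) ^ 2 / (2 * v₁)) *
        ((√(2 * π * v₂))⁻¹ * rexp (-(z - x - μ₂) ^ 2 / (2 * v₂)))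
      = (√(2 * π * v₁))⁻¹ * (√(2 * π * v₂))⁻¹ *
        (rexp (-(x - μ₁) ^ 2 / (2 * v₁)) * rexp (-(z - x - μ₂) ^ 2 / (2 * v₂))) by ring,
      ← Real.exp_add]
    have hexp : -(x - μ₁) ^ 2 / (2 * (v₁:ℝ)) + -(z - x - μ₂) ^ 2 / (2 * (v₂:ℝ))
        = D + -(k * (x - c)^2) := by
      rw [hk, hD, hc]
      field_simp
      ring
    rw [hexp, Real.exp_add]
    ring
  rw [integral_congr_ae (ae_of_all _ key), integral_const_mul]
  rw [show (fun x => rexp (-(k * (x - c)^2))) = fun x => rexp (-k * (x - c)^2) by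
    ext x; ring_nf]
  rw [integral_sub_right_eq_self (fun x => rexp (-k * x ^ 2)) c, integral_gaussian]
  rw [gaussianPDFReal]
  have h2v : (0:ℝ) < v₁ + v₂ := by positivity
  rw [show -(z - (μ₁ + μ₂)) ^ 2 / (2 * ((v₁ + v₂ : ℝ≥0) : ℝ)) = D by
    rw [hD]; push_cast; ring_nf]
  rw [show (√(2 * π * ((v₁ + v₂ : ℝ≥0) : ℝ)))⁻¹ * rexp D
    = ((√(2 * π * v₁))⁻¹ * (√(2 * π * v₂))⁻¹ * √(π / k)) * rexp D from ?_]
  · ring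
  · congr 1
    push_cast
    rw [← Real.sqrt_inv, ← Real.sqrt_inv, ← Real.sqrt_inv, ← Real.sqrt_mul (by positivity),
      ← Real.sqrt_mul (by positivity)]
    congr 1
    rw [hk]
    field_simp

lemma gaussianPDFReal_le (μ : ℝ) (v : ℝ≥0) (x : ℝ) :
    gaussianPDFReal μ v x ≤ (√(2 * π * v))⁻¹ := by
  rw [gaussianPDFReal]
  have h1 : rexp (-(x - μ) ^ 2 / (2 * v)) ≤ 1 := by
    rw [Real.exp_le_one_iff]
    apply div_nonpos_of_nonpos_of_nonneg
    · simp [sq_nonneg]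
    · positivity
  calc (√(2 * π * v))⁻¹ * rexp (-(x - μ) ^ 2 / (2 * v)) ≤ (√(2 * π * v))⁻¹ * 1 := by
        gcongr
    _ = (√(2 * π * v))⁻¹ := mul_one _

lemma lintegral_gaussianPDF_conv (μ₁ μ₂ : ℝ) {v₁ v₂ : ℝ≥0} (h₁ : v₁ ≠ 0) (h₂ : v₂ ≠ 0) (z : ℝ) :
    ∫⁻ x, gaussianPDF μ₁ v₁ x * gaussianPDF μ₂ v₂ (z - x)
      = gaussianPDF (μ₁ + μ₂) (v₁ + v₂) z := by
  have hint : Integrable (fun x => gaussianPDFReal μ₁ v₁ x * gaussianPDFReal μ₂ v₂ (z - x)) := by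
    refine Integrable.mono' ((integrable_gaussianPDFReal μ₁ v₁).mul_const (√(2 * π * v₂))⁻¹)
      ?_ (ae_of_all _ fun x => ?_)
    · exact ((stronglyMeasurable_gaussianPDFReal μ₁ v₁).mul
        ((stronglyMeasurable_gaussianPDFReal μ₂ v₂).comp_measurable
          (measurable_const.sub measurable_id))).aestronglyMeasurable
    · rw [Real.norm_eq_abs, abs_of_nonneg (mul_nonneg (gaussianPDFReal_nonneg _ _ _)
        (gaussianPDFReal_nonneg _ _ _))]
      exact mul_le_mul_of_nonneg_left (gaussianPDFReal_le _ _ _) (gaussianPDFReal_nonneg _ _ _)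
  simp only [gaussianPDF]
  simp_rw [← ENNReal.ofReal_mul (gaussianPDFReal_nonneg _ _ _)]
  rw [← ofReal_integral_eq_lintegral_ofReal hint (ae_of_all _ fun x =>
    mul_nonneg (gaussianPDFReal_nonneg _ _ _) (gaussianPDFReal_nonneg _ _ _))]
  rw [gaussianPDFReal_conv μ₁ μ₂ h₁ h₂ z]

lemma measurable_gaussianPDF_sub (μ : ℝ) (v : ℝ≥0) :
    Measurable (fun p : ℝ × ℝ => gaussianPDF μ v (p.2 - p.1)) :=
  (measurable_gaussianPDF μ v).comp (measurable_snd.sub measurable_fst)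

lemma gaussianReal_conv (μ₁ μ₂ : ℝ) (v₁ v₂ : ℝ≥0) :
    ((gaussianReal μ₁ v₁).prod (gaussianReal μ₂ v₂)).map (fun p : ℝ × ℝ => p.1 + p.2)
      = gaussianReal (μ₁ + μ₂) (v₁ + v₂) := by
  by_cases h₁ : v₁ = 0
  · subst h₁
    rw [gaussianReal_zero_var, Measure.dirac_prod, Measure.map_map (by fun_prop) (by fun_prop)]
    have : ((fun p : ℝ × ℝ => p.1 + p.2) ∘ Prod.mk μ₁) = (fun y => μ₁ + y) := rfl
    rw [this, gaussianReal_map_const_add, add_comm μ₂ μ₁, zero_add]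
  by_cases h₂ : v₂ = 0
  · subst h₂
    rw [gaussianReal_zero_var, Measure.prod_dirac, Measure.map_map (by fun_prop) (by fun_prop)]
    have : ((fun p : ℝ × ℝ => p.1 + p.2) ∘ fun x => (x, μ₂)) = (fun x => x + μ₂) := rfl
    rw [this, gaussianReal_map_add_const, add_zero]
  -- main case
  have hv12 : v₁ + v₂ ≠ 0 := by
    simp only [← NNReal.coe_ne_zero] at *
    push_cast
    positivity
  have hmap : Measurable (fun p : ℝ × ℝ => p.1 + p.2) := by fun_prop
  refine Measure.ext_of_Iic _ _ (fun t => ?_)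
  rw [Measure.map_apply hmap measurableSet_Iic]
  have hpre : (fun p : ℝ × ℝ => p.1 + p.2) ⁻¹' Iic t = {p : ℝ × ℝ | p.1 + p.2 ≤ t} := rfl
  rw [hpre, Measure.prod_apply (by exact measurableSet_le (by fun_prop) measurable_const)]
  have hsec : ∀ x : ℝ, (Prod.mk x ⁻¹' {p : ℝ × ℝ | p.1 + p.2 ≤ t}) = Iic (t - x) := by
    intro x; ext y; simp [le_sub_iff_add_le, add_comm]
  simp_rw [hsec]
  -- rewrite ν (Iic (t - x)) as translated lintegral
  have hν : ∀ x : ℝ, gaussianReal μ₂ v₂ (Iic (t - x))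
      = ∫⁻ z, if z ≤ t then gaussianPDF μ₂ v₂ (z - x) else 0 := by
    intro x
    rw [gaussianReal_apply _ h₂, ← lintegral_indicator measurableSet_Iic,
      ← lintegral_sub_right_eq_self (fun z => (Iic (t - x)).indicator (gaussianPDF μ₂ v₂) z) x]
    refine lintegral_congr fun z => ?_
    by_cases hz : z ≤ t
    · rw [Set.indicator_of_mem (by simpa [sub_le_sub_iff_right] using hz), if_pos hz]
    · rw [Set.indicator_of_notMem (by simpa [sub_le_sub_iff_right] using hz), if_neg hz]
  simp_rw [hν]
  have hmeas2 : Measurable (fun p : ℝ × ℝ =>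
      gaussianPDF μ₁ v₁ p.1 * if p.2 ≤ t then gaussianPDF μ₂ v₂ (p.2 - p.1) else 0) := by
    refine ((measurable_gaussianPDF μ₁ v₁).comp measurable_fst).mul ?_
    exact Measurable.ite (measurableSet_le measurable_snd measurable_const)
      (measurable_gaussianPDF_sub μ₂ v₂) measurable_const
  rw [gaussianReal_of_var_ne_zero _ h₁,
    lintegral_withDensity_eq_lintegral_mul _ (measurable_gaussianPDF _ _)
      (Measurable.lintegral_prod_right (f := fun x z => if z ≤ t then gaussianPDF μ₂ v₂ (z - x) else 0)
        (Measurable.ite (measurableSet_le measurable_snd measurable_const)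
          (measurable_gaussianPDF_sub μ₂ v₂) measurable_const))]
  simp only [Pi.mul_apply]
  calc ∫⁻ x, gaussianPDF μ₁ v₁ x * ∫⁻ z, (if z ≤ t then gaussianPDF μ₂ v₂ (z - x) else 0)
      = ∫⁻ x, ∫⁻ z, gaussianPDF μ₁ v₁ x * (if z ≤ t then gaussianPDF μ₂ v₂ (z - x) else 0) := by
        refine lintegral_congr fun x => ?_
        exact (lintegral_const_mul _
          ((Measurable.ite (measurableSet_le measurable_id measurable_const)
            ((measurable_gaussianPDF μ₂ v₂).comp (measurable_id.sub_const x)) measurable_const :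
            Measurable fun z : ℝ => if z ≤ t then gaussianPDF μ₂ v₂ (z - x) else 0))).symm
    _ = ∫⁻ z, ∫⁻ x, gaussianPDF μ₁ v₁ x * (if z ≤ t then gaussianPDF μ₂ v₂ (z - x) else 0) :=
        lintegral_lintegral_swap hmeas2.aemeasurable
    _ = ∫⁻ z, if z ≤ t then gaussianPDF (μ₁ + μ₂) (v₁ + v₂) z else 0 := by
        refine lintegral_congr fun z => ?_
        by_cases hz : z ≤ t
        · simp only [if_pos hz]
          exact lintegral_gaussianPDF_conv μ₁ μ₂ h₁ h₂ z
        · simp [if_neg hz]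
    _ = gaussianReal (μ₁ + μ₂) (v₁ + v₂) (Iic t) := by
        rw [gaussianReal_apply _ hv12, ← lintegral_indicator measurableSet_Iic]
        refine lintegral_congr fun z => ?_
        by_cases hz : z ≤ t
        · rw [if_pos hz, Set.indicator_of_mem (by simpa using hz)]
        · rw [if_neg hz, Set.indicator_of_notMem (by simpa using hz)]

noncomputable def sqNN (a : ℝ) : ℝ≥0 := ⟨a ^ 2, sq_nonneg a⟩

lemma gaussianReal_map_linear_pi (n : ℕ) (m : ℝ) (v : ℝ≥0) (w : Fin n → ℝ) :
    (Measure.pi fun _ : Fin n => gaussianReal m v).map (fun x => ∑ i, w i * x i)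
      = gaussianReal (m * ∑ i, w i) ((∑ i, sqNN (w i)) * v) := by
  induction n with
  | zero =>
      rw [Measure.pi_of_empty]
      rw [Measure.map_dirac' (by fun_prop)]
      simp [gaussianReal_zero_var]
  | succ n ih =>
      have he := measurePreserving_piFinSuccAbove (fun _ : Fin (n+1) => gaussianReal m v) 0
      set e := MeasurableEquiv.piFinSuccAbove (fun _ : Fin (n+1) => ℝ) 0 with he'
      have hcomp : (fun x : Fin (n+1) → ℝ => ∑ i, w i * x i)
          = (fun p : ℝ × (Fin n → ℝ) => w 0 * p.1 + ∑ j : Fin n, w j.succ * p.2 j) ∘ e := by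
        ext x
        simp only [Function.comp_apply, he', MeasurableEquiv.piFinSuccAbove_apply]
        rw [Fin.sum_univ_succ]
        congr 1
      rw [hcomp, ← Measure.map_map (by fun_prop) e.measurable, he.map_eq]
      have hsplit : (fun p : ℝ × (Fin n → ℝ) => w 0 * p.1 + ∑ j : Fin n, w j.succ * p.2 j)
          = (fun q : ℝ × ℝ => q.1 + q.2) ∘
            (Prod.map (fun a : ℝ => w 0 * a) (fun y : Fin n → ℝ => ∑ j, w j.succ * y j)) := rfl
      rw [hsplit, ← Measure.map_map (by fun_prop) (by fun_prop),
        ← Measure.map_prod_map _ _ (by fun_prop) (by fun_prop)]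
      have h0 : (Measure.map (fun a : ℝ => w 0 * a) (gaussianReal m v))
          = gaussianReal (w 0 * m) (sqNN (w 0) * v) := gaussianReal_map_const_mul _
      rw [h0, ih (fun j => w j.succ), gaussianReal_conv]
      congr 1
      · rw [Fin.sum_univ_succ]; ring
      · rw [Fin.sum_univ_succ, add_mul]

lemma gaussianReal_std (M : ℝ) (V : ℝ≥0) (hV : V ≠ 0) (a : ℝ) :
    gaussianReal M V (Iic a) = gaussianReal 0 1 (Iic ((a - M) / Real.sqrt V)) := by
  have hVpos : (0:ℝ) < V := lt_of_le_of_ne V.2 (by exact_mod_cast (Ne.symm hV))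
  have hs : (0:ℝ) < Real.sqrt V := Real.sqrt_pos.mpr hVpos
  have hmap : gaussianReal M V = (gaussianReal 0 1).map (fun z => Real.sqrt V * z + M) := by
    have h1 : (gaussianReal 0 1).map (fun z => Real.sqrt V * z) = gaussianReal 0 V := by
      rw [show (fun z : ℝ => Real.sqrt V * z) = (Real.sqrt V * ·) from rfl,
        gaussianReal_map_const_mul]
      congr 1
      · ring
      · rw [mul_one]
        ext
        simp [Real.sq_sqrt V.2]
    have h2 : (fun z : ℝ => Real.sqrt V * z + M) = (· + M) ∘ (fun z => Real.sqrt V * z) := rfl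
    rw [h2, ← Measure.map_map (by fun_prop) (by fun_prop), h1, gaussianReal_map_add_const,
      zero_add]
  rw [hmap, Measure.map_apply (by fun_prop) measurableSet_Iic]
  congr 1
  ext z
  simp only [mem_preimage, mem_Iic]
  rw [le_div_iff₀ hs]
  constructor <;> intro h <;> nlinarith

/-- The standard normal cumulative distribution function. -/
noncomputable def Phi (t : ℝ) : ℝ :=
  ((gaussianReal 0 1) (Set.Iic t)).toReal

/-- The probability that a linear functional of an i.i.d. spherical Gaussian vector is
negative, in closed form. -/
theorem gaussian_halfspace_measure
    (d : ℕ) (hd : 1 ≤ d)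
    (σ m b : ℝ) (hσ : 0 < σ)
    (w : Fin d → ℝ) (hw : w ≠ 0) :
    ((Measure.pi fun _ : Fin d => gaussianReal m ⟨σ ^ 2, sq_nonneg σ⟩)
        {x : Fin d → ℝ | (∑ i, w i * x i) + b < 0}).toReal
      = Phi (-(b + m * ∑ i, w i) / (σ * Real.sqrt (∑ i, (w i) ^ 2))) := by
  have hsum : (0:ℝ) < ∑ i, (w i) ^ 2 := by
    obtain ⟨i, hi⟩ : ∃ i, w i ≠ 0 := by
      by_contra h
      push_neg at h
      exact hw (funext h)
    exact Finset.sum_pos' (fun j _ => sq_nonneg _) ⟨i, Finset.mem_univ i, by positivity⟩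
  set V : ℝ≥0 := (∑ i, sqNN (w i)) * sqNN σ with hV
  have hVcoe : (V : ℝ) = (∑ i, (w i) ^ 2) * σ ^ 2 := by
    rw [hV]
    rw [NNReal.coe_mul, NNReal.coe_sum]
    rfl
  have hVne : V ≠ 0 := by
    rw [← NNReal.coe_ne_zero, hVcoe]
    positivity
  have hf : Measurable (fun x : Fin d → ℝ => ∑ i, w i * x i) := by fun_prop
  have hset : {x : Fin d → ℝ | (∑ i, w i * x i) + b < 0}
      = (fun x : Fin d → ℝ => ∑ i, w i * x i) ⁻¹' Iio (-b) := by
    ext x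
    simp only [mem_setOf_eq, mem_preimage, mem_Iio]
    constructor <;> intro h <;> linarith
  have hsqNNσ : (⟨σ ^ 2, sq_nonneg σ⟩ : ℝ≥0) = sqNN σ := rfl
  rw [hset, ← Measure.map_apply hf measurableSet_Iio, hsqNNσ,
    gaussianReal_map_linear_pi d m (sqNN σ) w, ← hV]
  have hIio : gaussianReal (m * ∑ i, w i) V (Iio (-b))
      = gaussianReal (m * ∑ i, w i) V (Iic (-b)) := by
    have h0 : gaussianReal (m * ∑ i, w i) V {(-b)} = 0 :=
      gaussianReal_absolutelyContinuous _ hVne (measure_singleton _)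
    apply le_antisymm (measure_mono Iio_subset_Iic_self)
    calc gaussianReal (m * ∑ i, w i) V (Iic (-b))
        = gaussianReal (m * ∑ i, w i) V (Iio (-b) ∪ {(-b)}) := by rw [Iio_union_right]
      _ ≤ gaussianReal (m * ∑ i, w i) V (Iio (-b)) + gaussianReal (m * ∑ i, w i) V {(-b)} :=
          measure_union_le _ _
      _ = gaussianReal (m * ∑ i, w i) V (Iio (-b)) := by rw [h0, add_zero]
  rw [hIio, gaussianReal_std _ _ hVne]
  rw [Phi]
  congr 2
  rw [hVcoe, Real.sqrt_mul (by positivity), Real.sqrt_sq hσ.le]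
  ring_nf
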